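/- For positive integers m, n: if (1 - 1/2^(2^m))^(2^n) ≤ 1/2, then for all x in [0,1], 1 - (1 - x^(2^m))^(2^n) ≥ (1 - (1-x)^(2^m))^(2^n); that is, Z_{1^m 0^n}(x) ≥ Z_{0^m 1^n}(x) on [0,1]. -/

import Mathlib

open Real Finset

private lemma exp_ge_cubic' (y : ℝ) (hy : 0 ≤ y) : 1 + y + y^2/2 + y^3/6 ≤ Real.exp y := by
  have h := Real.sum_le_exp_of_nonneg hy 4
  simp [Finset.sum_range_succ, Nat.factorial] at h
  linarith [h]

private lemma two_mul_le_two_pow' (a : ℕ) (ha : 2 ≤ a) : 2*a ≤ 2^a := by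
  induction a with
  | zero => simp
  | succ k ih =>
    rcases Nat.lt_or_ge k 2 with hk | hk
    · interval_cases k <;> simp_all
    · have h1 := ih hk
      have h2 : 2 ≤ 2^k := by
        calc (2:ℕ) = 2^1 := rfl
          _ ≤ 2^k := Nat.pow_le_pow_right (by norm_num) (by omega)
      rw [pow_succ]; omega

private lemma pow_aux' (x : ℝ) (a k : ℕ) : (2*x)^a * ((2-2*x)^a)^k = (2*x*(2-2*x)^k)^a := by
  rw [← pow_mul, mul_comm a k, pow_mul, ← mul_pow]

private lemma exp_nat_ge' (k : ℕ) : (2.71:ℝ)^k ≤ Real.exp k := by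
  have h1 : Real.exp k = (Real.exp 1)^k := by
    rw [← Real.exp_nat_mul]; norm_num
  rw [h1]
  apply pow_le_pow_left₀ (by norm_num)
  have := Real.exp_one_gt_d9; linarith

/-- Main reduction: if `Np * exp Nq ≥ 1 + Np` then the pointwise sum inequality holds. -/
private lemma chain' (a : ℕ) (x : ℝ) (hx0 : 0 ≤ x) (hx1 : x ≤ 1)
    (hcond : 1 + (2*x)^a ≤ (2*x)^a * Real.exp ((2-2*x)^a)) :
    (1 - (1-x)^a)^(2^a) + (1 - x^a)^(2^a) ≤ 1 := by
  set N := 2^a with hN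
  set p := x^a with hp
  set q := (1-x)^a with hq
  have hp0 : 0 ≤ p := pow_nonneg hx0 a
  have hp1 : p ≤ 1 := pow_le_one₀ hx0 hx1
  have hq0 : 0 ≤ q := pow_nonneg (by linarith) a
  have hq1 : q ≤ 1 := pow_le_one₀ (by linarith) (by linarith)
  have hNp : (2*x)^a = (N:ℝ) * p := by
    rw [hp, hN, mul_pow]; push_cast; ring
  have hNq : (2-2*x)^a = (N:ℝ) * q := by
    have e : (2:ℝ) - 2*x = 2*(1-x) := by ring
    rw [e, hq, hN, mul_pow]; push_cast; ring
  have h1 : (1 - q)^N ≤ Real.exp (-((N:ℝ)*q)) := by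
    have e1 : 1 - q ≤ Real.exp (-q) := by
      have := Real.add_one_le_exp (-q); linarith
    calc (1-q)^N ≤ (Real.exp (-q))^N := pow_le_pow_left₀ (by linarith) e1 N
      _ = Real.exp ((N:ℝ) * (-q)) := (Real.exp_nat_mul _ N).symm
      _ = Real.exp (-((N:ℝ)*q)) := by ring_nf
  have h2 : (1 - p)^N * (1 + (N:ℝ)*p) ≤ 1 := by
    have e1 : 1 + (N:ℝ)*p ≤ (1+p)^N := by
      have := one_add_mul_le_pow (by linarith : (-2:ℝ) ≤ p) N; linarith
    calc (1-p)^N * (1 + (N:ℝ)*p) ≤ (1-p)^N * (1+p)^N := by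
          apply mul_le_mul_of_nonneg_left e1 (pow_nonneg (by linarith) N)
      _ = ((1-p)*(1+p))^N := (mul_pow _ _ _).symm
      _ ≤ 1 := by
          apply pow_le_one₀ (by nlinarith) (by nlinarith)
  have h3 : Real.exp (-((N:ℝ)*q)) * (1 + (N:ℝ)*p) ≤ (N:ℝ)*p := by
    rw [hNp, hNq] at hcond
    have he : 0 < Real.exp (-((N:ℝ)*q)) := Real.exp_pos _
    have hm := mul_le_mul_of_nonneg_left hcond he.le
    calc Real.exp (-((N:ℝ)*q)) * (1 + (N:ℝ)*p)
        ≤ Real.exp (-((N:ℝ)*q)) * ((N:ℝ)*p * Real.exp ((N:ℝ)*q)) := hm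
      _ = (N:ℝ)*p * (Real.exp (-((N:ℝ)*q)) * Real.exp ((N:ℝ)*q)) := by ring
      _ = (N:ℝ)*p := by rw [← Real.exp_add]; simp
  have huN : (1 - q)^N * (1 + (N:ℝ)*p) ≤ (N:ℝ)*p := by
    calc (1-q)^N * (1 + (N:ℝ)*p) ≤ Real.exp (-((N:ℝ)*q)) * (1 + (N:ℝ)*p) := by
          apply mul_le_mul_of_nonneg_right h1 (by positivity)
      _ ≤ (N:ℝ)*p := h3
  have hpos : (0:ℝ) < 1 + (N:ℝ)*p := by positivity
  have hfin : ((1-q)^N + (1-p)^N) * (1 + (N:ℝ)*p) ≤ (N:ℝ)*p + 1 := by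
    have := add_le_add huN h2; linarith [this]
  nlinarith [hfin, hpos]

private lemma rangeA' (a : ℕ) (ha : 2 ≤ a) (x : ℝ) (hx0 : 0 ≤ x) (hx : x ≤ 1/(a^2:ℝ)) :
    (1 - (1-x)^a)^(2^a) + (1 - x^a)^(2^a) ≤ 1 := by
  set N := 2^a with hN
  have haR : (2:ℝ) ≤ (a:ℝ) := by exact_mod_cast ha
  have hx1 : x ≤ 1 := by
    have : (1:ℝ)/(a^2:ℝ) ≤ 1 := by
      rw [div_le_one (by positivity)]; nlinarith
    linarith
  have hp0 : 0 ≤ x^a := pow_nonneg hx0 a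
  have hu_le : 1 - (1-x)^a ≤ (a:ℝ)*x := by
    have h := one_add_mul_le_pow (by linarith : (-2:ℝ) ≤ -x) a
    have h2 : 1 + (a:ℝ)*(-x) ≤ (1-x)^a := by
      rw [sub_eq_add_neg]; exact h
    linarith
  have hu0 : 0 ≤ 1 - (1-x)^a := by
    have : (1-x)^a ≤ 1 := pow_le_one₀ (by linarith) (by linarith)
    linarith
  have hNa : a ≤ N := by
    have := two_mul_le_two_pow' a ha; omega
  have hkey : ((a:ℝ)*x)^N ≤ x^a := by
    have e1 : ((a:ℝ)*x)^N = ((a:ℝ)^N * x^(N-a)) * x^a := by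
      rw [mul_pow, mul_assoc, ← pow_add]
      congr 2
      omega
    rw [e1]
    have e2 : x^(N-a) ≤ (1/(a:ℝ)^2)^(N-a) := pow_le_pow_left₀ hx0 hx (N-a)
    have e4 : (a:ℝ)^N * (1/(a:ℝ)^2)^(N-a) ≤ 1 := by
      rw [div_pow, one_pow, ← pow_mul]
      rw [mul_one_div, div_le_one (by positivity)]
      apply pow_le_pow_right₀ (by linarith)
      have := two_mul_le_two_pow' a ha
      omega
    have e5 : (a:ℝ)^N * x^(N-a) ≤ 1 := by
      calc (a:ℝ)^N * x^(N-a) ≤ (a:ℝ)^N * (1/(a:ℝ)^2)^(N-a) :=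
            mul_le_mul_of_nonneg_left e2 (by positivity)
        _ ≤ 1 := e4
    calc ((a:ℝ)^N * x^(N-a)) * x^a ≤ 1 * x^a :=
          mul_le_mul_of_nonneg_right e5 hp0
      _ = x^a := one_mul _
  have h1 : (1 - (1-x)^a)^N ≤ x^a := by
    calc (1 - (1-x)^a)^N ≤ ((a:ℝ)*x)^N := pow_le_pow_left₀ hu0 hu_le N
      _ ≤ x^a := hkey
  have h2 : (1 - x^a)^N ≤ 1 - x^a := by
    calc (1 - x^a)^N ≤ (1 - x^a)^1 :=
          pow_le_pow_of_le_one
            (by linarith [(pow_le_one₀ hx0 hx1 : x^a ≤ 1)])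
            (by linarith [(pow_nonneg hx0 a : 0 ≤ x^a)])
            (Nat.one_le_two_pow)
      _ = 1 - x^a := pow_one _
  linarith

private lemma suppC2' (a : ℕ) (ha : 2 ≤ a) (x : ℝ) (h1 : 1/4 ≤ x) (h2 : x ≤ 7/20) :
    1 + (2*x)^a ≤ (2*x)^a * Real.exp ((2-2*x)^a) := by
  set y := (2-2*x)^a with hy
  have hy0 : 0 ≤ y := pow_nonneg (by linarith) a
  have hexp : 1 + y^2/2 + y^3/6 ≤ Real.exp y := by
    have := exp_ge_cubic' y hy0; linarith
  have key : 1 + (2*x)^a ≤ (2*x)^a * (1 + y^2/2 + y^3/6) := by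
    have e2 : (2*x)^a * y^2 = (2*x*(2-2*x)^2)^a := pow_aux' x a 2
    have e3 : (2*x)^a * y^3 = (2*x*(2-2*x)^3)^a := pow_aux' x a 3
    have f2 : (9/8:ℝ) ≤ 2*x*(2-2*x)^2 := by
      nlinarith [sq_nonneg (x-1/4), sq_nonneg (x-7/20)]
    have f3 : (3/2:ℝ) ≤ 2*x*(2-2*x)^3 := by
      nlinarith [sq_nonneg (x-1/4), sq_nonneg (x-7/20),
        mul_nonneg (sub_nonneg.2 h1) (sub_nonneg.2 h2), sq_nonneg (x-3/10)]
    have g2 : (9/8:ℝ)^a ≤ (2*x*(2-2*x)^2)^a := pow_le_pow_left₀ (by norm_num) f2 a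
    have g3 : (3/2:ℝ)^a ≤ (2*x*(2-2*x)^3)^a := pow_le_pow_left₀ (by norm_num) f3 a
    have F4 : 1 ≤ (9/8:ℝ)^a/2 + (3/2:ℝ)^a/6 := by
      have k1 : (9/8:ℝ)^2 ≤ (9/8:ℝ)^a := pow_le_pow_right₀ (by norm_num) ha
      have k2 : (3/2:ℝ)^2 ≤ (3/2:ℝ)^a := pow_le_pow_right₀ (by norm_num) ha
      norm_num at k1 k2 ⊢; linarith
    have expand : (2*x)^a * (1 + y^2/2 + y^3/6)
        = (2*x)^a + ((2*x)^a*y^2)/2 + ((2*x)^a*y^3)/6 := by ring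
    rw [expand, e2, e3]
    linarith
  calc 1 + (2*x)^a ≤ (2*x)^a * (1 + y^2/2 + y^3/6) := key
    _ ≤ (2*x)^a * Real.exp y := by
        apply mul_le_mul_of_nonneg_left hexp (by positivity)

private lemma suppC1' (a : ℕ) (x : ℝ) (h1 : 7/20 ≤ x) (h2 : x ≤ 1/2) :
    1 + (2*x)^a ≤ (2*x)^a * Real.exp ((2-2*x)^a) := by
  set y := (2-2*x)^a with hy
  have hy0 : 0 ≤ y := pow_nonneg (by linarith) a
  have hexp : 1 + y + y^2/2 ≤ Real.exp y := by
    have := exp_ge_cubic' y hy0; nlinarith [pow_nonneg hy0 3]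
  have e1 : (2*x)^a * y = (2*x*(2-2*x))^a := by
    rw [hy, ← mul_pow]
  have e2 : (2*x)^a * y^2 = (2*x*(2-2*x)^2)^a := pow_aux' x a 2
  have b1 : 1 - (a:ℝ)*(1-2*x)^2 ≤ (2*x*(2-2*x))^a := by
    have h := one_add_mul_le_pow (by nlinarith : (-2:ℝ) ≤ -(1-2*x)^2) a
    have e : (1 + -(1-2*x)^2) = 2*x*(2-2*x) := by ring
    rw [e] at h
    linarith
  have hδ0 : (0:ℝ) ≤ 2*x*(2-2*x)^2 - 1 := by nlinarith [sq_nonneg (x-1/2)]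
  have b2 : 1 + (a:ℝ)*(2*x*(2-2*x)^2 - 1) ≤ (2*x*(2-2*x)^2)^a := by
    have h := one_add_mul_le_pow (by linarith : (-2:ℝ) ≤ 2*x*(2-2*x)^2 - 1) a
    have e : (1 + (2*x*(2-2*x)^2 - 1)) = 2*x*(2-2*x)^2 := by ring
    rw [e] at h
    linarith
  have fδ : 2*(1-2*x)^2 ≤ 2*x*(2-2*x)^2 - 1 := by
    nlinarith [sq_nonneg (x-7/20), sq_nonneg (x-1/2)]
  have haR : (0:ℝ) ≤ (a:ℝ) := by positivity
  have key : 1 + (2*x)^a ≤ (2*x)^a * (1 + y + y^2/2) := by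
    have expand : (2*x)^a * (1 + y + y^2/2)
        = (2*x)^a + (2*x)^a*y + ((2*x)^a*y^2)/2 := by ring
    rw [expand, e1, e2]
    have : (a:ℝ)*(2*x*(2-2*x)^2-1)/2 - (a:ℝ)*(1-2*x)^2 ≥ 0 := by
      have := mul_le_mul_of_nonneg_left fδ haR
      linarith
    linarith [b1, b2]
  calc 1 + (2*x)^a ≤ (2*x)^a * (1 + y + y^2/2) := key
    _ ≤ (2*x)^a * Real.exp y := by
        apply mul_le_mul_of_nonneg_left hexp (by positivity)

private lemma suppB_abs' (a : ℕ) (x c d Y : ℝ) (hc : 0 < c) (h1 : c ≤ 2*x) (h2 : 2*x ≤ d)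
    (hY : Y ≤ (2-2*x)^a) (hkey : 1 + d^a ≤ c^a * Real.exp Y) :
    1 + (2*x)^a ≤ (2*x)^a * Real.exp ((2-2*x)^a) := by
  have hx0 : 0 < 2*x := lt_of_lt_of_le hc h1
  have h3 : (2*x)^a ≤ d^a := pow_le_pow_left₀ hx0.le h2 a
  have h4 : c^a ≤ (2*x)^a := pow_le_pow_left₀ hc.le h1 a
  have h5 : Real.exp Y ≤ Real.exp ((2-2*x)^a) := Real.exp_le_exp.2 hY
  calc 1 + (2*x)^a ≤ 1 + d^a := by linarith
    _ ≤ c^a * Real.exp Y := hkey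
    _ ≤ (2*x)^a * Real.exp ((2-2*x)^a) :=
        mul_le_mul h4 h5 (Real.exp_pos _).le (pow_nonneg hx0.le a)

private lemma three_halves_pow' (a : ℕ) (ha : 8 ≤ a) : 3*(a:ℝ) ≤ (3/2:ℝ)^a := by
  induction a with
  | zero => simp
  | succ k ih =>
    rcases Nat.lt_or_ge k 8 with hk | hk
    · have hk7 : k = 7 := by omega
      subst hk7; norm_num
    · have h := ih hk
      have hk' : (8:ℝ) ≤ (k:ℝ) := by exact_mod_cast hk
      have h2 := mul_le_mul_of_nonneg_left h (by norm_num : (0:ℝ) ≤ 3/2)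
      have e : ((3:ℝ)/2)^(k+1) = (3/2)^k * (3/2) := pow_succ _ k
      rw [e]
      push_cast
      nlinarith

private lemma seven_fourth_pow' (a : ℕ) (ha : 8 ≤ a) : 1 + (a:ℝ)^2 ≤ (7/4:ℝ)^a := by
  induction a with
  | zero => simp
  | succ k ih =>
    rcases Nat.lt_or_ge k 8 with hk | hk
    · have hk7 : k = 7 := by omega
      subst hk7; norm_num
    · have h := ih hk
      have hk' : (8:ℝ) ≤ (k:ℝ) := by exact_mod_cast hk
      have h2 := mul_le_mul_of_nonneg_left h (by norm_num : (0:ℝ) ≤ 7/4)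
      have e : ((7:ℝ)/4)^(k+1) = (7/4)^k * (7/4) := pow_succ _ k
      rw [e]
      push_cast
      nlinarith [sq_nonneg ((k:ℝ)-8)]

private lemma suppB_dyadic' (a j : ℕ) (ha : 8 ≤ a) (hj2 : 2 ≤ j) (hja : j ≤ a) (x : ℝ)
    (hx1 : ((2:ℝ)^(j+1))⁻¹ ≤ x) (hx2 : x ≤ ((2:ℝ)^j)⁻¹) :
    1 + (2*x)^a ≤ (2*x)^a * Real.exp ((2-2*x)^a) := by
  set c : ℝ := ((2:ℝ)^j)⁻¹ with hc
  have hcpos : 0 < c := by positivity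
  have h1 : c ≤ 2*x := by
    have e : c = 2 * ((2:ℝ)^(j+1))⁻¹ := by
      rw [hc, pow_succ]; field_simp
    rw [e]; linarith
  have h2 : 2*x ≤ 2*c := by linarith
  set Y : ℝ := 1 + (j:ℝ)*(a:ℝ) with hY
  have haR : (8:ℝ) ≤ (a:ℝ) := by exact_mod_cast ha
  have hkey : 1 + (2*c)^a ≤ c^a * Real.exp Y := by
    have hc2 : 2*c ≤ 1/2 := by
      rw [hc]
      have h4 : (4:ℝ) ≤ 2^j := by
        calc (4:ℝ) = 2^2 := by norm_num
          _ ≤ 2^j := pow_le_pow_right₀ (by norm_num) hj2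
      rw [div_eq_mul_inv, one_mul]
      rw [mul_inv_le_iff₀ (by positivity)]
      rw [inv_mul_eq_div, le_div_iff₀ (by norm_num)]
      linarith
    have hd1 : (2*c)^a ≤ 1 := by
      apply pow_le_one₀ (by positivity) (by linarith)
    have e1 : c^a = ((2:ℝ)^(j*a))⁻¹ := by
      rw [hc, inv_pow, ← pow_mul]
    have e2 : ((2:ℝ)^(1+j*a)) ≤ Real.exp Y := by
      have hlog : ((1:ℝ)+(j:ℝ)*(a:ℝ)) * Real.log 2 ≤ Y := by
        have hl2 : Real.log 2 ≤ 1 := by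
          have := Real.log_two_lt_d9; linarith
        have hpos : (0:ℝ) ≤ 1 + (j:ℝ)*(a:ℝ) := by positivity
        nlinarith [Real.log_nonneg (by norm_num : (1:ℝ) ≤ 2)]
      have q1 : Real.exp (((1+j*a : ℕ):ℝ) * Real.log 2) = 2^(1+j*a) := by
        rw [Real.exp_nat_mul, Real.exp_log (by norm_num : (0:ℝ) < 2)]
      rw [← q1]
      apply Real.exp_le_exp.2
      push_cast
      linarith [hlog]
    have e3 : c^a * ((2:ℝ)^(1+j*a)) = 2 := by
      rw [e1, pow_add, pow_one]
      field_simp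
    calc 1 + (2*c)^a ≤ 2 := by linarith
      _ = c^a * ((2:ℝ)^(1+j*a)) := e3.symm
      _ ≤ c^a * Real.exp Y := by
          apply mul_le_mul_of_nonneg_left e2 (by positivity)
  have hbound : Y ≤ (2-2*x)^a := by
    have hxc : 2*x ≤ 2*c := h2
    rcases Nat.lt_or_ge j 3 with hj | hj
    · have hj2' : j = 2 := by omega
      have hcv : c = 1/4 := by rw [hc, hj2']; norm_num
      have h32 : (3/2:ℝ) ≤ 2-2*x := by rw [hcv] at hxc; linarith
      have := three_halves_pow' a ha
      have hp : (3/2:ℝ)^a ≤ (2-2*x)^a := pow_le_pow_left₀ (by norm_num) h32 a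
      have hYb : Y ≤ 3*(a:ℝ) := by
        rw [hY, hj2']; push_cast; nlinarith
      linarith
    · have hcv : c ≤ 1/8 := by
        rw [hc]
        have h8 : (8:ℝ) ≤ 2^j := by
          calc (8:ℝ) = 2^3 := by norm_num
            _ ≤ 2^j := pow_le_pow_right₀ (by norm_num) hj
        rw [inv_le_comm₀ (by positivity) (by norm_num)]
        linarith
      have h74 : (7/4:ℝ) ≤ 2-2*x := by linarith
      have := seven_fourth_pow' a ha
      have hp : (7/4:ℝ)^a ≤ (2-2*x)^a := pow_le_pow_left₀ (by norm_num) h74 a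
      have hYb : Y ≤ 1 + (a:ℝ)^2 := by
        rw [hY]
        have : (j:ℝ) ≤ (a:ℝ) := by exact_mod_cast hja
        nlinarith
      linarith
  exact suppB_abs' a x c (2*c) Y hcpos h1 h2 hbound hkey

-- the three numeric intervals for a = 4
private lemma suppB_a4' (x : ℝ) (h1 : 1/16 ≤ x) (h2 : x ≤ 1/4) :
    1 + (2*x)^4 ≤ (2*x)^4 * Real.exp ((2-2*x)^4) := by
  rcases le_or_gt x (1/8) with hc | hc
  · -- c = 1/8, d = 1/4, Y = 9
    apply suppB_abs' 4 x (1/8) (1/4) 9 (by norm_num) (by linarith) (by linarith)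
    · have h32 : (7/4:ℝ) ≤ 2-2*x := by linarith
      have hp : (7/4:ℝ)^4 ≤ (2-2*x)^4 := pow_le_pow_left₀ (by norm_num) h32 4
      norm_num at hp ⊢
      linarith
    · have := exp_nat_ge' 9
      push_cast at this
      norm_num
      nlinarith [this]
  rcases le_or_gt x (3/16) with hd | hd
  · -- c = 1/4, d = 3/8, Y = 6
    apply suppB_abs' 4 x (1/4) (3/8) 6 (by norm_num) (by linarith) (by linarith)
    · have h32 : (13/8:ℝ) ≤ 2-2*x := by linarith
      have hp : (13/8:ℝ)^4 ≤ (2-2*x)^4 := pow_le_pow_left₀ (by norm_num) h32 4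
      norm_num at hp ⊢
      linarith
    · have := exp_nat_ge' 6
      push_cast at this
      norm_num
      nlinarith [this]
  · -- c = 3/8, d = 1/2, Y = 5
    apply suppB_abs' 4 x (3/8) (1/2) 5 (by norm_num) (by linarith) (by linarith)
    · have h32 : (3/2:ℝ) ≤ 2-2*x := by linarith
      have hp : (3/2:ℝ)^4 ≤ (2-2*x)^4 := pow_le_pow_left₀ (by norm_num) h32 4
      norm_num at hp ⊢
      linarith
    · have := exp_nat_ge' 5
      push_cast at this
      norm_num
      nlinarith [this]

/-- Core inequality on `[0, 1/2]` for `a = 2^m`. -/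
private lemma sumCore' (m : ℕ) (hm : 1 ≤ m) (x : ℝ) (hx0 : 0 ≤ x) (hx : x ≤ 1/2) :
    (1 - (1-x)^(2^m))^(2^(2^m)) + (1 - x^(2^m))^(2^(2^m)) ≤ 1 := by
  set a := 2^m with haDef
  have ha2 : 2 ≤ a := by
    calc 2 = 2^1 := rfl
      _ ≤ 2^m := Nat.pow_le_pow_right (by norm_num) hm
  have hx1 : x ≤ 1 := by linarith
  rcases le_or_gt x (1/(a^2:ℝ)) with hA | hA
  · exact rangeA' a ha2 x hx0 hA
  have hxpos : 0 < x := by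
    have : (0:ℝ) < 1/(a^2:ℝ) := by positivity
    linarith
  rcases le_or_gt x (1/4) with hB | hB
  · -- range B : 1/a² < x ≤ 1/4
    apply chain' a x hx0 hx1
    have hm2 : 2 ≤ m := by
      by_contra hcon
      have hm1 : m = 1 := by omega
      rw [hm1] at haDef
      have : a = 2 := haDef
      rw [this] at hA
      norm_num at hA
      linarith
    rcases Nat.lt_or_ge m 3 with hm3 | hm3
    · -- m = 2, a = 4
      have hmeq : m = 2 := by omega
      have haeq : a = 4 := by rw [haDef, hmeq]; norm_num
      rw [haeq]
      apply suppB_a4' x _ hB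
      rw [haeq] at hA
      norm_num at hA
      linarith
    · -- m ≥ 3, a ≥ 8 : dyadic
      have ha8 : 8 ≤ a := by
        calc 8 = 2^3 := rfl
          _ ≤ 2^m := Nat.pow_le_pow_right (by norm_num) hm3
      set n₀ := ⌊x⁻¹⌋₊ with hn₀
      have hinv4 : (4:ℝ) ≤ x⁻¹ := by
        rw [le_inv_comm₀ (by norm_num) hxpos]
        linarith
      have hn₀4 : 4 ≤ n₀ := Nat.le_floor (by exact_mod_cast hinv4)
      have hn₀ne : n₀ ≠ 0 := by omega
      set j := Nat.log 2 n₀ with hj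
      have hj2 : 2 ≤ j := by
        apply (Nat.le_log_iff_pow_le (by norm_num) hn₀ne).2
        simpa using hn₀4
      have hja : j ≤ a := by
        have hn₀lt : n₀ < 2^(2*m) := by
          have hxinv : x⁻¹ < (a:ℝ)^2 := by
            rw [inv_lt_comm₀ hxpos (by positivity), inv_eq_one_div]
            exact hA
          have : (n₀:ℝ) ≤ x⁻¹ := Nat.floor_le (by positivity)
          have hcast : ((2^(2*m) : ℕ):ℝ) = (a:ℝ)^2 := by
            rw [haDef]; push_cast
            rw [← pow_mul, mul_comm]
          have : (n₀:ℝ) < ((2^(2*m):ℕ):ℝ) := by rw [hcast]; linarith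
          exact_mod_cast this
        have := Nat.log_lt_of_lt_pow hn₀ne hn₀lt
        have h2m : 2*m ≤ 2^m := two_mul_le_two_pow' m hm2
        omega
      apply suppB_dyadic' a j ha8 hj2 hja x
      · have hlt : x⁻¹ < (n₀:ℝ) + 1 := Nat.lt_floor_add_one _
        have h2 : (n₀:ℝ) + 1 ≤ (2:ℝ)^(j+1) := by
          have h3 := Nat.lt_pow_succ_log_self (by norm_num : 1 < 2) n₀
          have h4 : n₀ + 1 ≤ 2^(j+1) := h3
          exact_mod_cast h4
        have hfin : x⁻¹ ≤ (2:ℝ)^(j+1) := by linarith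
        rw [inv_le_comm₀ (by positivity) hxpos]
        exact hfin
      · have hple : (2:ℝ)^j ≤ (n₀:ℝ) := by
          have h3 := Nat.pow_log_le_self 2 hn₀ne
          exact_mod_cast h3
        have h5 : (2:ℝ)^j ≤ x⁻¹ := le_trans hple (Nat.floor_le (by positivity))
        rw [le_inv_comm₀ hxpos (by positivity)]
        exact h5
  rcases le_or_gt x (7/20) with hC | hC
  · exact chain' a x hx0 hx1 (suppC2' a ha2 x (by linarith) hC)
  · exact chain' a x hx0 hx1 (suppC1' a x (by linarith) hx)

/-- Symmetrized core: valid on all of `[0,1]`. -/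
private lemma sumCoreFull' (m : ℕ) (hm : 1 ≤ m) (x : ℝ) (hx0 : 0 ≤ x) (hx1 : x ≤ 1) :
    (1 - (1-x)^(2^m))^(2^(2^m)) + (1 - x^(2^m))^(2^(2^m)) ≤ 1 := by
  rcases le_or_gt x (1/2) with h | h
  · exact sumCore' m hm x hx0 h
  · have := sumCore' m hm (1-x) (by linarith) (by linarith)
    have e : 1 - (1-x) = x := by ring
    rw [e] at this
    linarith

theorem Z_1m0n_ge_Z_0m1n (m n : ℕ) (hm : 0 < m) (hn : 0 < n)
    (h : ((1 : ℝ) - 1 / 2 ^ (2 ^ m)) ^ (2 ^ n) ≤ 1 / 2) :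
    ∀ x ∈ Set.Icc (0:ℝ) 1,
      ((1 - (1 - x) ^ (2 ^ m)) ^ (2 ^ n) : ℝ) ≤ 1 - (1 - x ^ (2 ^ m)) ^ (2 ^ n) := by
  intro x hx
  obtain ⟨hx0, hx1⟩ := hx
  set a := 2^m with haDef
  have ha2 : 2 ≤ a := by
    calc 2 = 2^1 := rfl
      _ ≤ 2^m := Nat.pow_le_pow_right (by norm_num) hm
  -- Step 1 : from h deduce a ≤ n
  have han : a ≤ n := by
    by_contra hcon
    push_neg at hcon
    have hna : n ≤ a - 1 := by omega
    set ε : ℝ := 1 / 2 ^ a with hε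
    have hε0 : 0 < ε := by positivity
    have hε1 : ε ≤ 1/4 := by
      rw [hε]
      apply div_le_div_of_nonneg_left (by norm_num) (by norm_num)
      calc (4:ℝ) = 2^2 := by norm_num
        _ ≤ 2^a := pow_le_pow_right₀ (by norm_num) ha2
    -- b * ε ≤ 1/2  where b = 2^n
    have hbε : (2:ℝ)^n * ε ≤ 1/2 := by
      rw [hε]
      rw [mul_one_div, div_le_div_iff₀ (by positivity) (by norm_num)]
      calc (2:ℝ)^n * 2 = 2^(n+1) := by rw [pow_succ]
        _ ≤ 2^a := pow_le_pow_right₀ (by norm_num) (by omega)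
        _ = 1 * 2^a := by ring
    -- Bernoulli on squares: (1-ε)^(2^n) ≥ 1 - 2^n ε + 2^(n-1) ε²
    have hsq : 1 - (2:ℝ)^n * ε + (2:ℝ)^(n-1) * ε^2 ≤ (1-ε)^(2^n) := by
      have hn1 : n = (n-1) + 1 := by omega
      have e1 : (2:ℕ)^n = 2^(n-1) * 2 := by
        conv_lhs => rw [hn1]
        rw [pow_succ]
      have e2 : ((1:ℝ)-ε)^(2^n) = (((1:ℝ)-ε)^2)^(2^(n-1)) := by
        rw [e1, mul_comm, pow_mul]
      rw [e2]
      have hb := one_add_mul_le_pow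
        (by nlinarith : (-2:ℝ) ≤ -(2*ε - ε^2)) (2^(n-1))
      have e3 : (1 + -(2*ε - ε^2)) = ((1:ℝ)-ε)^2 := by ring
      rw [e3] at hb
      have e4 : ((2:ℝ)^n) = 2 * (2:ℝ)^(n-1) := by
        conv_lhs => rw [hn1]
        rw [pow_succ]; ring
      have hcast : ((2^(n-1) : ℕ):ℝ) = (2:ℝ)^(n-1) := by push_cast; ring
      rw [e4]
      calc 1 - 2 * (2:ℝ)^(n-1) * ε + (2:ℝ)^(n-1) * ε^2
          = 1 + ((2^(n-1):ℕ):ℝ) * (-(2*ε - ε^2)) := by rw [hcast]; ring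
        _ ≤ (((1:ℝ)-ε)^2)^(2^(n-1)) := hb
    have hcontr : (1:ℝ)/2 < (1-ε)^(2^n) := by
      have h1 : (0:ℝ) < (2:ℝ)^(n-1) * ε^2 := by positivity
      calc (1:ℝ)/2 = 1 - 1/2 := by norm_num
        _ ≤ 1 - (2:ℝ)^n * ε := by linarith
        _ < 1 - (2:ℝ)^n * ε + (2:ℝ)^(n-1) * ε^2 := by linarith
        _ ≤ (1-ε)^(2^n) := hsq
    rw [hε] at hcontr
    linarith
  -- Step 2 : reduce exponent 2^n to N = 2^a
  have hNb : (2:ℕ)^a ≤ 2^n := Nat.pow_le_pow_right (by norm_num) han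
  have hcore := sumCoreFull' m hm x hx0 hx1
  rw [← haDef] at hcore
  set u : ℝ := 1 - (1-x)^a with hu
  set v : ℝ := 1 - x^a with hv
  have hu0 : 0 ≤ u := by
    rw [hu]
    have : (1-x)^a ≤ 1 := pow_le_one₀ (by linarith) (by linarith)
    linarith
  have hu1 : u ≤ 1 := by
    rw [hu]
    have : 0 ≤ (1-x)^a := pow_nonneg (by linarith) a
    linarith
  have hv0 : 0 ≤ v := by
    rw [hv]
    have : x^a ≤ 1 := pow_le_one₀ hx0 hx1
    linarith
  have hv1 : v ≤ 1 := by
    rw [hv]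
    have : 0 ≤ x^a := pow_nonneg hx0 a
    linarith
  have h1 : u^(2^n) ≤ u^(2^a) := pow_le_pow_of_le_one hu0 hu1 hNb
  have h2 : v^(2^n) ≤ v^(2^a) := pow_le_pow_of_le_one hv0 hv1 hNb
  calc u^(2^n) ≤ u^(2^a) := h1
    _ ≤ 1 - v^(2^a) := by linarith [hcore]
    _ ≤ 1 - v^(2^n) := by linarith [h2]
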